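/- Finite-state selectors are compositional: for any finite alphabet Σ and any deterministic finite automata A and B over Σ, there exists a deterministic finite automaton C over Σ such that for every finite or infinite sequence w over Σ, C[w] = B[A[w]]. -/

import Mathlib

open Filter
open scoped Classical

/-- The word selected from `w` by the strategy `S ⊆ Σ*`: the symbols `w_j` (in order)
such that the prefix `w_1 … w_(j-1)` belongs to `S`. -/
noncomputable def selectWord {Γ : Type*} (S : Set (List Γ)) (w : List Γ) : List Γ :=
  (List.finRange w.length).filterMap fun (j : Fin w.length) =>
    if w.take (j : ℕ) ∈ S then some (w.get j) else none

/-- `D[w]`: the word selected from `w` by the DFA `D` (started in its start state): the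
symbols of `w` read from an accepting state. -/
noncomputable def dfaSelectWord {Γ σ : Type*} (D : DFA Γ σ) (w : List Γ) : List Γ :=
  selectWord {u | D.eval u ∈ D.accept} w

theorem selectWord_eq_zip {Γ : Type*} (S : Set (List Γ)) (w : List Γ) :
    selectWord S w = ((List.range w.length).zip w).filterMap
      (fun p => if w.take p.1 ∈ S then some p.2 else none) := by
  have h1 : (List.finRange w.length).map Fin.val = List.range w.length := by
    apply List.ext_getElem <;> simp
  have hz : (List.range w.length).zip w
      = (List.finRange w.length).map (fun (j : Fin w.length) => (j.val, w.get j)) := by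
    rw [← h1, ← List.zip_map', List.map_get_finRange]
  rw [hz, List.filterMap_map]
  rfl

theorem selectWord_snoc {Γ : Type*} (S : Set (List Γ)) (w : List Γ) (a : Γ) :
    selectWord S (w ++ [a]) = selectWord S w ++ if w ∈ S then [a] else [] := by
  rw [selectWord_eq_zip, selectWord_eq_zip]
  have hlen : (w ++ [a]).length = w.length + 1 := by simp
  rw [hlen, List.range_succ,
      List.zip_append (by simp), List.filterMap_append]
  congr 1
  · apply List.filterMap_congr
    rintro ⟨j, b⟩ hp
    have hj : j ∈ List.range w.length := (List.of_mem_zip hp).1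
    have : j < w.length := List.mem_range.mp hj
    rw [List.take_append_of_le_length this.le]
  · have ht : (w ++ [a]).take w.length = w := List.take_left
    by_cases h : w ∈ S <;> simp [List.filterMap_cons, ht, h]

theorem dfaSelectWord_snoc {Γ σ : Type*} (D : DFA Γ σ) (w : List Γ) (a : Γ) :
    dfaSelectWord D (w ++ [a]) =
      dfaSelectWord D w ++ if D.eval w ∈ D.accept then [a] else [] := by
  exact selectWord_snoc {u | D.eval u ∈ D.accept} w a

/-- Finite-state selectors are compositional: for DFAs `A` and `B` over a finite alphabet `Γ`
there is a DFA `C` such that `C[w] = B[A[w]]` for every word `w` (and hence for every finite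
or infinite sequence, since selection is determined by its action on all finite prefixes). -/
theorem finiteState_selectors_compositional
    (Γ : Type) [Fintype Γ] (σ₁ σ₂ : Type) [Fintype σ₁] [Fintype σ₂]
    (A : DFA Γ σ₁) (B : DFA Γ σ₂) :
    ∃ (τ : Type) (_ : Fintype τ) (C : DFA Γ τ),
      ∀ w : List Γ, dfaSelectWord C w = dfaSelectWord B (dfaSelectWord A w) := by
  classical
  refine ⟨σ₁ × σ₂, inferInstance,
    { step := fun p a => (A.step p.1 a, if p.1 ∈ A.accept then B.step p.2 a else p.2),
      start := (A.start, B.start),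
      accept := {p | p.1 ∈ A.accept ∧ p.2 ∈ B.accept} }, ?_⟩
  set C : DFA Γ (σ₁ × σ₂) :=
    { step := fun p a => (A.step p.1 a, if p.1 ∈ A.accept then B.step p.2 a else p.2),
      start := (A.start, B.start),
      accept := {p | p.1 ∈ A.accept ∧ p.2 ∈ B.accept} } with hC
  have key : ∀ w : List Γ,
      C.eval w = (A.eval w, B.eval (dfaSelectWord A w)) ∧
      dfaSelectWord C w = dfaSelectWord B (dfaSelectWord A w) := by
    intro w
    induction w using List.reverseRecOn with
    | nil =>
      constructor
      · simp [DFA.eval_nil, dfaSelectWord, selectWord, hC]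
      · simp [dfaSelectWord, selectWord]
    | append_singleton w a ih =>
      obtain ⟨heval, hsel⟩ := ih
      have hA : dfaSelectWord A (w ++ [a]) =
          dfaSelectWord A w ++ if A.eval w ∈ A.accept then [a] else [] :=
        dfaSelectWord_snoc A w a
      have hCeval : C.eval (w ++ [a]) = (A.eval (w ++ [a]), B.eval (dfaSelectWord A (w ++ [a]))) := by
        rw [DFA.eval_append_singleton, heval, DFA.eval_append_singleton, hA]
        by_cases h : A.eval w ∈ A.accept <;>
          simp [hC, DFA.eval_append_singleton, h, DFA.step]
      refine ⟨hCeval, ?_⟩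
      rw [dfaSelectWord_snoc C w a, hsel, hA, heval]
      by_cases h : A.eval w ∈ A.accept
      · by_cases h2 : B.eval (dfaSelectWord A w) ∈ B.accept <;>
          simp [hC, h, h2, dfaSelectWord_snoc]
      · simp [hC, h]
  exact fun w => (key w).2
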